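/- Let α in N^d be positive integers with a solution x* in {−1,1}^d to α·x* = 0. Set n := d+1 and v := (x*, 1) in R^n. Define, for i in [n−1], P_i := {(x,ξ_n) : −1 ≤ x_i ≤ 1, −2 ≤ ξ_j ≤ 2 for j ≠ i}, and P_n := {(x,ξ_n) : −2·1 ≤ x ≤ 2·1, 1 ≤ ξ_n ≤ 1, 0 ≤ 2α·x ≤ 1}. Then v lies in P := ∩_{i=1}^n P_i, and for each i in [n], v lies in a facet of P_i: namely v ∈ H(e_i, x*_i) ∩ P_i for i ≤ n−1, and v lies in the facet {(x,ξ_n) ∈ P_n : α·x = 0} of P_n. -/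

import Mathlib

/-- The axis-parallel brick `P_i` (for `i ≤ n-1`) of the Partition reduction. -/
def brickP (d : ℕ) (i : Fin d) : Set (EuclideanSpace ℝ (Fin (d + 1))) :=
  {y | (-1 ≤ y i.castSucc ∧ y i.castSucc ≤ 1) ∧
    ∀ j : Fin (d + 1), j ≠ i.castSucc → (-2 ≤ y j ∧ y j ≤ 2)}

/-- The slab polyhedron `P_n` of the Partition reduction. -/
def slabPn (d : ℕ) (α : Fin d → ℕ) : Set (EuclideanSpace ℝ (Fin (d + 1))) :=
  {y | (∀ i : Fin d, -2 ≤ y i.castSucc ∧ y i.castSucc ≤ 2) ∧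
    (1 ≤ y (Fin.last d) ∧ y (Fin.last d) ≤ 1) ∧
    (0 ≤ 2 * ∑ i, (α i : ℝ) * y i.castSucc ∧
      2 * ∑ i, (α i : ℝ) * y i.castSucc ≤ 1)}

/-- Given a Partition solution `x* ∈ {-1,1}^d` with `α·x* = 0`, the point
`v = (x*, 1)` lies in `P = P_n ∩ ⋂ᵢ P_i`, and for each `i` it lies in a facet of
`P_i` (namely `H(eᵢ, x*ᵢ) ∩ P_i`), and in the facet `{α·x = 0}` of `P_n`. -/
theorem partition_solution_gives_mixed_point (d : ℕ) (α : Fin d → ℕ)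
    (hα : ∀ i, 0 < α i) (xstar : Fin d → ℤ)
    (hx : ∀ i, xstar i = 1 ∨ xstar i = -1)
    (hsol : ∑ i, (α i : ℤ) * xstar i = 0) :
    let v : EuclideanSpace ℝ (Fin (d + 1)) :=
      WithLp.toLp 2 (Fin.snoc (fun i => (xstar i : ℝ)) 1 : Fin (d + 1) → ℝ)
    (v ∈ slabPn d α) ∧ (∀ i : Fin d, v ∈ brickP d i) ∧
      (∀ i : Fin d, v ∈ {y ∈ brickP d i | y i.castSucc = (xstar i : ℝ)}) ∧
      v ∈ {y ∈ slabPn d α | ∑ i, (α i : ℝ) * y i.castSucc = 0} := by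
  intro v
  have hvc : ∀ i : Fin d, v i.castSucc = (xstar i : ℝ) := fun i => by
    simp [v, Fin.snoc_castSucc]
  have hvl : v (Fin.last d) = 1 := by simp [v]
  have hbd : ∀ i : Fin d, -1 ≤ (xstar i : ℝ) ∧ (xstar i : ℝ) ≤ 1 := fun i => by
    rcases hx i with h | h <;> rw [h] <;> norm_num
  have hsum : ∑ i, (α i : ℝ) * v i.castSucc = 0 := by
    simp only [hvc]
    have := congrArg (Int.cast : ℤ → ℝ) hsol
    push_cast at this
    exact this
  have hslab : v ∈ slabPn d α := by
    refine ⟨fun i => ?_, ⟨hvl.ge, hvl.le⟩, ?_, ?_⟩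
    · rw [hvc]; exact ⟨by linarith [(hbd i).1], by linarith [(hbd i).2]⟩
    · rw [hsum]; norm_num
    · rw [hsum]; norm_num
  have hbrick : ∀ i : Fin d, v ∈ brickP d i := fun i => by
    refine ⟨by rw [hvc]; exact hbd i, fun j _ => ?_⟩
    rcases Fin.eq_castSucc_or_eq_last j with ⟨k, rfl⟩ | rfl
    · rw [hvc]; exact ⟨by linarith [(hbd k).1], by linarith [(hbd k).2]⟩
    · rw [hvl]; norm_num
  exact ⟨hslab, hbrick, fun i => ⟨hbrick i, hvc i⟩, hslab, hsum⟩
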